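/- Let X be a Hausdorff cellular-Lindelöf first-countable space. Then every family of pairwise disjoint nonempty open subsets of X has cardinality at most the continuum, i.e., c(X) ≤ 𝔠. -/

import Mathlib

open Cardinal Set Topology

universe u

/-- A subset `D` is discrete (as a subspace): every point of `D` has an open
neighbourhood meeting `D` only in that point. -/
def IsDiscreteSubset {X : Type u} [TopologicalSpace X] (D : Set X) : Prop :=
  ∀ x ∈ D, ∃ U : Set X, IsOpen U ∧ U ∩ D = {x}

/-- `X` is almost discretely Lindelöf: every discrete subset is contained in a
Lindelöf subspace. -/
def AlmostDiscretelyLindelof (X : Type u) [TopologicalSpace X] : Prop :=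
  ∀ D : Set X, IsDiscreteSubset D → ∃ L : Set X, IsLindelof L ∧ D ⊆ L

/-- The character of `X` is at most `κ`: every point has an open neighbourhood
base of cardinality at most `κ`. -/
def HasCharacterLE (X : Type u) [TopologicalSpace X] (κ : Cardinal.{u}) : Prop :=
  ∀ x : X, ∃ B : Set (Set X), #B ≤ κ ∧ (∀ U ∈ B, IsOpen U ∧ x ∈ U) ∧
    ∀ V ∈ nhds x, ∃ U ∈ B, U ⊆ V

/-- `R` is right-separated: it carries a well-order in which each point has a
neighbourhood avoiding all strictly later points (initial segments are open). -/
def RightSeparated {X : Type u} [TopologicalSpace X] (R : Set X) : Prop :=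
  ∃ r : R → R → Prop, IsWellOrder R r ∧
    ∀ a : R, ∃ U : Set X, IsOpen U ∧ (a : X) ∈ U ∧ ∀ b : R, (b : X) ∈ U → ¬ r a b

/-- `R` is left-separated: it carries a well-order in which each point has a
neighbourhood avoiding all strictly earlier points (initial segments are closed). -/
def LeftSeparated {X : Type u} [TopologicalSpace X] (R : Set X) : Prop :=
  ∃ r : R → R → Prop, IsWellOrder R r ∧
    ∀ a : R, ∃ U : Set X, IsOpen U ∧ (a : X) ∈ U ∧ ∀ b : R, (b : X) ∈ U → ¬ r b a

/-- The θ-closure operator: `x ∈ thetaCl A` iff the closure of every open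
neighbourhood of `x` meets `A`. -/
def thetaCl {X : Type u} [TopologicalSpace X] (A : Set X) : Set X :=
  {x | ∀ U : Set X, IsOpen U → x ∈ U → (closure U ∩ A).Nonempty}

/-- `A` is θ-closed if it coincides with its θ-closure operator value. -/
def IsThetaClosed {X : Type u} [TopologicalSpace X] (A : Set X) : Prop :=
  thetaCl A = A

/-- `[A]_θ`, the smallest θ-closed set containing `A`. -/
def thetaClosure {X : Type u} [TopologicalSpace X] (A : Set X) : Set X :=
  ⋂₀ {B : Set X | A ⊆ B ∧ IsThetaClosed B}

/-- A (well-ordered) sequence is free if at every cut the closures of the two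
pieces are disjoint. -/
def IsFreeSeq {X : Type u} [TopologicalSpace X] {ι : Type u} [LinearOrder ι]
    (f : ι → X) : Prop :=
  ∀ i : ι, closure (f '' {j | j < i}) ∩ closure (f '' {j | i ≤ j}) = ∅

/-- A (well-ordered) sequence is θ-free if at every cut the θ-closure of the
initial piece is disjoint from the closure of the final piece. -/
def IsThetaFreeSeq {X : Type u} [TopologicalSpace X] {ι : Type u} [LinearOrder ι]
    (f : ι → X) : Prop :=
  ∀ i : ι, thetaClosure (f '' {j | j < i}) ∩ closure (f '' {j | i ≤ j}) = ∅

/-- A cellular family: pairwise disjoint nonempty open sets. -/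
def IsCellularFamily {X : Type u} [TopologicalSpace X] (𝒰 : Set (Set X)) : Prop :=
  (∀ U ∈ 𝒰, IsOpen U ∧ U.Nonempty) ∧ 𝒰.PairwiseDisjoint id

/-- `X` is cellular-Lindelöf: every cellular family admits a Lindelöf subspace
meeting each of its members. -/
def CellularLindelof (X : Type u) [TopologicalSpace X] : Prop :=
  ∀ 𝒰 : Set (Set X), IsCellularFamily 𝒰 →
    ∃ L : Set X, IsLindelof L ∧ ∀ U ∈ 𝒰, (U ∩ L).Nonempty

/-- `lam` is a caliber of `X`: any `lam`-many nonempty open sets include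
`lam`-many with a common point. -/
def IsCaliber (X : Type u) [TopologicalSpace X] (lam : Cardinal.{u}) : Prop :=
  ∀ (ι : Type u) (U : ι → Set X), #ι = lam →
    (∀ i, IsOpen (U i) ∧ (U i).Nonempty) →
    ∃ S : Set ι, #S = lam ∧ (⋂ i ∈ S, U i).Nonempty


section ArhangelskiiAux
open Filter Classical Ordinal
set_option linter.unusedSectionVars false
set_option linter.unusedVariables false


section Arhangelskii

variable {Y : Type u} [TopologicalSpace Y] [T2Space Y] [FirstCountableTopology Y]

/-- A countable base of open neighbourhoods at each point. -/
lemma arh_exists_base : ∃ b : Y → ℕ → Set Y,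
    ∀ x : Y, (∀ n, IsOpen (b x n) ∧ x ∈ b x n) ∧ ∀ V ∈ 𝓝 x, ∃ n, b x n ⊆ V := by
  have h : ∀ x : Y, ∃ s : ℕ → Set Y, (𝓝 x).HasAntitoneBasis s :=
    fun x => (𝓝 x).exists_antitone_basis
  choose s hs using h
  refine ⟨fun x n => interior (s x n), fun x => ⟨fun n => ⟨isOpen_interior, ?_⟩, fun V hV => ?_⟩⟩
  · exact mem_interior_iff_mem_nhds.2 ((hs x).1.mem_of_mem trivial)
  · obtain ⟨n, -, hn⟩ := (hs x).1.mem_iff.1 hV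
    exact ⟨n, interior_subset.trans hn⟩

/-- cardinality of closure in a first countable T2 space -/
lemma arh_mk_closure_le (S : Set Y) (h : #S ≤ 𝔠) : #(closure S) ≤ Cardinal.continuum := by
  rcases S.eq_empty_or_nonempty with rfl | ⟨y, hy⟩
  · simp
  haveI : Nonempty Y := ⟨y⟩
  haveI : Nonempty S := ⟨⟨y, hy⟩⟩
  set f : (ℕ → S) → Y := fun u =>
    if h : ∃ x, Tendsto (fun n => ((u n : Y))) atTop (𝓝 x) then h.choose
    else Classical.arbitrary Y with hf
  have hsub : closure S ⊆ Set.range f := by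
    intro x hx
    obtain ⟨u, hu, hlim⟩ := mem_closure_iff_seq_limit.1 hx
    refine ⟨fun n => ⟨u n, hu n⟩, ?_⟩
    have hex : ∃ z, Tendsto (fun n => u n) atTop (𝓝 z) := ⟨x, hlim⟩
    simp only [hf, dif_pos hex]
    exact tendsto_nhds_unique hex.choose_spec hlim
  calc #(closure S) ≤ #(Set.range f) := mk_le_mk_of_subset hsub
    _ ≤ #(ℕ → S) := mk_range_le
    _ = (#S) ^ (ℵ₀ : Cardinal.{u}) := by
        rw [mk_arrow]; simp
    _ ≤ 𝔠 ^ (ℵ₀ : Cardinal.{u}) := by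
        exact power_le_power_right h
    _ = 𝔠 := continuum_power_aleph0





/-- One step of the Arhangel'skii closure construction. -/
noncomputable def arhG (y₀ : Y) (w : (ℕ → Y × ℕ) → Y) (A : Set Y) : Set Y :=
  insert y₀ (closure A ∪ w '' {s | ∀ n, (s n).1 ∈ A})

lemma arh_subset_G {y₀ : Y} {w} {A : Set Y} : A ⊆ arhG y₀ w A :=
  fun x hx => Or.inr (Or.inl (subset_closure hx))

lemma arhG_mono {y₀ : Y} {w} {A B : Set Y} (h : A ⊆ B) : arhG y₀ w A ⊆ arhG y₀ w B := by
  apply insert_subset_insert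
  apply union_subset_union (closure_mono h)
  exact image_mono (fun s hs n => h (hs n))

lemma arh_mem_G {y₀ : Y} {w} {A : Set Y} : y₀ ∈ arhG y₀ w A := mem_insert _ _

lemma arh_closure_subset_G {y₀ : Y} {w} {A : Set Y} : closure A ⊆ arhG y₀ w A :=
  fun x hx => Or.inr (Or.inl hx)

lemma arh_w_mem_G {y₀ : Y} {w} {A : Set Y} {s : ℕ → Y × ℕ} (hs : ∀ n, (s n).1 ∈ A) :
    w s ∈ arhG y₀ w A := Or.inr (Or.inr ⟨s, hs, rfl⟩)

lemma arh_mk_G_le [T2Space Y] [FirstCountableTopology Y] {y₀ : Y} {w} {A : Set Y}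
    (h : #A ≤ 𝔠) : #(arhG y₀ w A) ≤ 𝔠 := by
  have h1 : #(closure A) ≤ 𝔠 := arh_mk_closure_le A h
  have h2 : #({s : ℕ → Y × ℕ | ∀ n, (s n).1 ∈ A}) ≤ 𝔠 := by
    have hinj : Function.Injective
        (fun (s : {s : ℕ → Y × ℕ // ∀ n, (s n).1 ∈ A}) (n : ℕ) =>
          ((⟨(s.1 n).1, s.2 n⟩ : A), (s.1 n).2)) := by
      intro s₁ s₂ hs
      ext n
      · exact congrArg (fun p => ((p n).1 : Y)) hs
      · exact congrArg (fun p => (p n).2) hs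
    calc #({s : ℕ → Y × ℕ | ∀ n, (s n).1 ∈ A}) ≤ #(ℕ → A × ℕ) := mk_le_of_injective hinj
      _ = (#A * ℵ₀) ^ (ℵ₀ : Cardinal.{u}) := by
          rw [mk_arrow]; simp [mk_prod]
      _ ≤ (𝔠 : Cardinal.{u}) ^ (ℵ₀ : Cardinal.{u}) := by
          refine power_le_power_right ?_
          calc #A * ℵ₀ ≤ 𝔠 * 𝔠 := mul_le_mul' h aleph0_le_continuum
            _ = 𝔠 := continuum_mul_self
      _ = 𝔠 := continuum_power_aleph0
  have h3 : #(w '' {s : ℕ → Y × ℕ | ∀ n, (s n).1 ∈ A}) ≤ 𝔠 := mk_image_le.trans h2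
  calc #(arhG y₀ w A) ≤ #(closure A ∪ w '' {s : ℕ → Y × ℕ | ∀ n, (s n).1 ∈ A} : Set Y) + 1 :=
        mk_insert_le
    _ ≤ (#(closure A) + #(w '' {s : ℕ → Y × ℕ | ∀ n, (s n).1 ∈ A})) + 1 := by
        gcongr; exact mk_union_le _ _
    _ ≤ (𝔠 + 𝔠) + 𝔠 := by
        gcongr
        exact one_lt_aleph0.le.trans aleph0_le_continuum
    _ = 𝔠 := by rw [continuum_add_self, continuum_add_self]




noncomputable def arhF (g : Set Y → Set Y) : (aleph 1).ord.ToType → Set Y :=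
  fun a => WellFounded.fix wellFounded_lt
    (fun a rec => g (⋃ b : Iio a, rec b b.2)) a

lemma arhF_eq (g : Set Y → Set Y) (a : (aleph 1).ord.ToType) :
    arhF g a = g (⋃ b : Iio a, arhF g b) := by
  rw [arhF, WellFounded.fix_eq]
  rfl

lemma arh_seg_countable (a : (aleph 1).ord.ToType) : #(Iio a) ≤ ℵ₀ := by
  have := Cardinal.mk_Iio_ord_toType a
  exact Order.lt_succ_iff.1 (by rwa [succ_aleph0])

lemma arh_bound (f : ℕ → (aleph 1).ord.ToType) :
    ∃ c : (aleph 1).ord.ToType, ∀ n, f n < c := by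
  set e := (ToType.mk : Iio (aleph 1).ord ≃o (aleph 1).ord.ToType)
  set o : Ordinal := ⨆ n, ((e.symm (f n) : Iio (aleph 1).ord) : Ordinal)
  have ho : (⨆ n, ((e.symm (f n) : Iio (aleph 1).ord) : Ordinal)) < (aleph 1).ord := by
    exact Ordinal.iSup_lt_ord_lift (f := fun n => ((e.symm (f n) : Iio (aleph 1).ord) : Ordinal))
      (by rw [Cardinal.isRegular_aleph_one.cof_eq, mk_nat, lift_aleph0]; exact aleph0_lt_aleph_one)
      (fun n => (e.symm (f n)).2)
  have ho1 : o + 1 < (aleph 1).ord := by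
    have hlim := isSuccLimit_ord (aleph0_le_aleph 1)
    simpa using hlim.succ_lt ho
  refine ⟨e ⟨o + 1, ho1⟩, fun n => ?_⟩
  have : e.symm (f n) < ⟨o + 1, ho1⟩ := by
    show ((e.symm (f n) : Iio (aleph 1).ord) : Ordinal) < o + 1
    exact lt_of_le_of_lt (Ordinal.le_iSup (fun n => ((e.symm (f n) : Iio (aleph 1).ord) : Ordinal)) n)
      (by rw [Ordinal.add_one_eq_succ]; exact Order.lt_succ o)
  have := e.lt_iff_lt.2 this
  simpa using this

end Arhangelskii

open Ordinal in
theorem arhangelskii (Y : Type u) [TopologicalSpace Y] [T2Space Y] [FirstCountableTopology Y]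
    [LindelofSpace Y] : #Y ≤ Cardinal.continuum := by
  rcases isEmpty_or_nonempty Y with hY | hY
  · simp [mk_eq_zero]
  obtain ⟨b, hb⟩ := arh_exists_base (Y := Y)
  set y₀ : Y := Classical.arbitrary Y with hy₀
  set w : (ℕ → Y × ℕ) → Y := fun s =>
    if h : ((⋃ n, b (s n).1 (s n).2)ᶜ).Nonempty then h.choose else y₀ with hwdef
  have hw : ∀ s : ℕ → Y × ℕ, ((⋃ n, b (s n).1 (s n).2)ᶜ).Nonempty →
      w s ∉ ⋃ n, b (s n).1 (s n).2 := by
    intro s hs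
    simp only [hwdef, dif_pos hs]
    exact hs.choose_spec
  set g : Set Y → Set Y := arhG y₀ w with hgdef
  set F : (aleph 1).ord.ToType → Set Y := arhF g with hFdef
  have hFeq : ∀ a, F a = g (⋃ c : Iio a, F c) := arhF_eq g
  have Fmono : ∀ {a c : (aleph 1).ord.ToType}, a ≤ c → F a ⊆ F c := by
    intro a c hac
    rcases eq_or_lt_of_le hac with rfl | hlt
    · exact subset_rfl
    · rw [hFeq c]
      exact (subset_iUnion (fun d : Iio c => F d) ⟨a, hlt⟩).trans arh_subset_G
  have Fcard : ∀ a, #(F a) ≤ 𝔠 := by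
    intro a
    refine wellFounded_lt.induction (C := fun a => #(F a) ≤ 𝔠) a ?_
    intro a IH
    rw [hFeq a]
    apply arh_mk_G_le
    calc #(⋃ c : Iio a, F c) ≤ Cardinal.sum (fun c : Iio a => #(F c)) := mk_iUnion_le_sum_mk
      _ ≤ Cardinal.sum (fun _ : Iio a => 𝔠) := Cardinal.sum_le_sum _ _ (fun c => IH c c.2)
      _ = #(Iio a) * 𝔠 := Cardinal.sum_const' _ _
      _ ≤ ℵ₀ * 𝔠 := mul_le_mul_left (arh_seg_countable a) _
      _ = 𝔠 := aleph0_mul_continuum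
  set A : Set Y := ⋃ a, F a with hAdef
  have hmemA : ∀ (x : Y) a, x ∈ F a → x ∈ A := fun x a hx => mem_iUnion.2 ⟨a, hx⟩
  have hy₀A : y₀ ∈ A := by
    refine hmemA y₀ (Classical.choice (Cardinal.mk_ne_zero_iff.1 (by rw [mk_ord_toType]; exact (aleph_pos 1).ne'))) ?_
    · rw [hFeq]; exact arh_mem_G
  have hAcard : #A ≤ 𝔠 := by
    calc #A ≤ Cardinal.sum (fun a => #(F a)) := mk_iUnion_le_sum_mk
      _ ≤ Cardinal.sum (fun _ : (aleph 1).ord.ToType => 𝔠) := Cardinal.sum_le_sum _ _ Fcard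
      _ = #((aleph 1).ord.ToType) * 𝔠 := Cardinal.sum_const' _ _
      _ = (aleph 1) * 𝔠 := by rw [mk_ord_toType]
      _ ≤ 𝔠 * 𝔠 := mul_le_mul_left aleph_one_le_continuum _
      _ = 𝔠 := continuum_mul_self
  have hAclosed : IsClosed A := by
    rw [← closure_subset_iff_isClosed]
    intro x hx
    obtain ⟨u, hu, hlim⟩ := mem_closure_iff_seq_limit.1 hx
    have h1 : ∀ n, ∃ a, u n ∈ F a := fun n => mem_iUnion.1 (hu n)
    choose a ha using h1
    obtain ⟨c, hc⟩ := arh_bound a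
    have hxc : x ∈ closure (F c) :=
      mem_closure_iff_seq_limit.2 ⟨u, fun n => Fmono (hc n).le (ha n), hlim⟩
    obtain ⟨c', hc'⟩ := arh_bound (fun _ => c)
    refine hmemA x c' ?_
    rw [hFeq c']
    exact arhG_mono (subset_iUnion (fun d : Iio c' => F d) ⟨c, hc' 0⟩)
      (arh_closure_subset_G hxc)
  -- A is all of Y
  have hAuniv : A = Set.univ := by
    by_contra hne
    obtain ⟨q, hq⟩ : ∃ q : Y, q ∉ A := by
      rcases (ne_univ_iff_exists_notMem A).1 hne with ⟨q, hq⟩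
      exact ⟨q, hq⟩
    -- for each x ≠ q there is a basic nbhd whose closure misses q
    have hm0 : ∀ x : Y, x ≠ q → ∃ n, q ∉ closure (b x n) := by
      intro x hx
      obtain ⟨U, V, hU, hV, hxU, hqV, hUV⟩ := t2_separation hx
      obtain ⟨n, hn⟩ := (hb x).2 U (hU.mem_nhds hxU)
      refine ⟨n, fun hqcl => ?_⟩
      have : q ∈ V ∩ closure U := ⟨hqV, closure_mono hn hqcl⟩
      have := hV.inter_closure this
      rw [(disjoint_comm.1 hUV).inter_eq, closure_empty] at this
      exact this
    set m : Y → ℕ := fun x => if h : ∃ n, q ∉ closure (b x n) then h.choose else 0 with hmdef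
    have hmq : ∀ x : Y, x ≠ q → q ∉ closure (b x (m x)) := by
      intro x hx
      have h := hm0 x hx
      simp only [hmdef, dif_pos h]
      exact h.choose_spec
    -- Lindelöf: extract a countable subcover of the cover of A by the b x (m x)
    have hALin : IsLindelof A := hAclosed.isLindelof
    have hcov : A ⊆ ⋃ i : A, b (i : Y) (m (i : Y)) := by
      intro x hx
      exact mem_iUnion.2 ⟨⟨x, hx⟩, ((hb x).1 (m x)).2⟩
    obtain ⟨t, htc, htcov⟩ := hALin.elim_countable_subcover
      (fun i : A => b (i : Y) (m (i : Y))) (fun i => ((hb (i : Y)).1 _).1) hcov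
    have htne : t.Nonempty := by
      rcases t.eq_empty_or_nonempty with rfl | h
      · simpa using htcov hy₀A
      · exact h
    obtain ⟨e, he⟩ := Countable.exists_eq_range htc htne
    set s : ℕ → Y × ℕ := fun n => (((e n : A) : Y), m ((e n : A) : Y)) with hsdef
    -- all the points of s lie in some F c
    have h1 : ∀ n, ∃ a, ((e n : A) : Y) ∈ F a := fun n => mem_iUnion.1 (e n).2
    choose a ha using h1
    obtain ⟨c, hc⟩ := arh_bound a
    have hsF : ∀ n, (s n).1 ∈ ⋃ d : Iio c, F d := by
      intro n
      exact mem_iUnion.2 ⟨⟨a n, hc n⟩, ha n⟩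
    have hwA : w s ∈ A := by
      refine hmemA _ c ?_
      rw [hFeq c]
      exact arh_w_mem_G hsF
    -- q is not in the union of the chosen basic sets
    have hqU : q ∉ ⋃ n, b (s n).1 (s n).2 := by
      intro hqmem
      obtain ⟨n, hn⟩ := mem_iUnion.1 hqmem
      have hne' : ((e n : A) : Y) ≠ q := fun h => hq (h ▸ (e n).2)
      exact hmq _ hne' (subset_closure hn)
    have hwnot : w s ∉ ⋃ n, b (s n).1 (s n).2 := hw s ⟨q, hqU⟩
    -- but w s ∈ A is covered
    have : w s ∈ ⋃ n, b (s n).1 (s n).2 := by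
      have := htcov hwA
      rw [he] at this
      obtain ⟨i, ⟨n, hn⟩, hmem⟩ := by
        simpa only [mem_iUnion, exists_prop, mem_range] using this
      exact mem_iUnion.2 ⟨n, by rw [hsdef]; simpa [← hn] using hmem⟩
    exact hwnot this
  calc #Y = #(Set.univ : Set Y) := mk_univ.symm
    _ = #A := by rw [hAuniv]
    _ ≤ 𝔠 := hAcard

end ArhangelskiiAux

/-- in a Hausdorff cellular-Lindelöf first-countable space every
cellular family has cardinality at most the continuum. -/
theorem stmt9 {X : Type u} [TopologicalSpace X] [T2Space X]
    [FirstCountableTopology X] (hCL : CellularLindelof X) :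
    ∀ 𝒰 : Set (Set X), IsCellularFamily 𝒰 → #𝒰 ≤ Cardinal.continuum := by
  intro 𝒰 h𝒰
  obtain ⟨L, hL, hmeet⟩ := hCL 𝒰 h𝒰
  have hpt : ∀ U : 𝒰, ∃ x : L, (x : X) ∈ (U : Set X) := by
    intro U
    obtain ⟨x, hxU, hxL⟩ := hmeet U U.2
    exact ⟨⟨x, hxL⟩, hxU⟩
  choose f hf using hpt
  have hinj : Function.Injective f := by
    intro U V hUV
    by_contra hne
    have hUVne : (U : Set X) ≠ (V : Set X) := fun h => hne (Subtype.ext h)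
    have hdisj := h𝒰.2 U.2 V.2 hUVne
    exact (hdisj.ne_of_mem (hf U) (by rw [hUV]; exact hf V)) rfl
  haveI : LindelofSpace L := isLindelof_iff_LindelofSpace.1 hL
  calc #𝒰 ≤ #L := mk_le_of_injective hinj
    _ ≤ Cardinal.continuum := arhangelskii L
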